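/- If total payments assigned from consumer c in a block satisfy ∑_{p} a_p ≤ μ − w where μ is the operator-owned balance and w the amount already withdrawn, and withdrawals are processed sequentially each transferring exactly min(a_p, μ − w_current) and updating w_current, then every merchant p receives exactly a_p. -/

import Mathlib

/-- Sequential withdrawal completeness: if the total assigned amounts satisfy
`∑_{i < k} a i ≤ μ - w`, and withdrawals are processed sequentially from
`W 0 = w` with each step transferring `min (a i) (μ - W i)` and updating
`W (i+1) = W i + min (a i) (μ - W i)`, then every merchant `i < k` receives
exactly `a i`, i.e. `min (a i) (μ - W i) = a i`. -/
theorem stmt_19 (k : ℕ) (μ w : ℝ) (a : ℕ → ℝ) (W : ℕ → ℝ)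
    (hμ : 0 ≤ μ) (hw : 0 ≤ w) (hwμ : w ≤ μ) (ha : ∀ i, i < k → 0 ≤ a i)
    (hsum : ∑ i ∈ Finset.range k, a i ≤ μ - w)
    (hW0 : W 0 = w)
    (hWstep : ∀ i, i < k → W (i + 1) = W i + min (a i) (μ - W i)) :
    ∀ i, i < k → min (a i) (μ - W i) = a i := by
  have key : ∀ i, i ≤ k → W i = w + ∑ j ∈ Finset.range i, a j := by
    intro i
    induction i with
    | zero => simp [hW0]
    | succ n ih =>
      intro hn
      have hnk : n < k := hn
      have hWn := ih (Nat.le_of_lt hnk)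
      have hsub : ∑ j ∈ Finset.range (n + 1), a j ≤ ∑ j ∈ Finset.range k, a j :=
        Finset.sum_le_sum_of_subset_of_nonneg
          (Finset.range_subset_range.2 hn) (fun j hj _ => ha j (Finset.mem_range.1 hj))
      have han : a n ≤ μ - W n := by
        rw [hWn]
        have := Finset.sum_range_succ a n ▸ hsub
        linarith [hsub, Finset.sum_range_succ a n ▸ hsub]
      rw [hWstep n hnk, min_eq_left han, hWn, Finset.sum_range_succ]
      ring
  intro i hi
  have hWi := key i (Nat.le_of_lt hi)
  have hsub : ∑ j ∈ Finset.range (i + 1), a j ≤ ∑ j ∈ Finset.range k, a j :=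
    Finset.sum_le_sum_of_subset_of_nonneg
      (Finset.range_subset_range.2 hi) (fun j hj _ => ha j (Finset.mem_range.1 hj))
  rw [Finset.sum_range_succ] at hsub
  apply min_eq_left
  rw [hWi]
  linarith
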